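/- For every ε > 0 and sufficiently large n, every graph G on n vertices with minimum degree at least εn admits an edge covering E = E₁ ∪ … ∪ E_ℓ with ℓ = ⌈2ε⁻² log₂ n⌉ such that each E_i spans a subgraph of diameter at most 3. -/

import Mathlib

open Finset

/-- The subgraph spanned by the edge set `E'` (on the vertices covered by `E'`)
has diameter at most `d`. -/
def EdgeSetDiamLE {V : Type*} (E' : Set (Sym2 V)) (d : ℕ) : Prop :=
  ∀ a b : V, a ∈ (SimpleGraph.fromEdgeSet E').support →
    b ∈ (SimpleGraph.fromEdgeSet E').support →
    (SimpleGraph.fromEdgeSet E').edist a b ≤ d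

namespace Stmt13

variable {n : ℕ}

/-- Edges of walks of length 3 from `v` to `w`. -/
def covSet (G : SimpleGraph (Fin n)) (v w : Fin n) : Set (Sym2 (Fin n)) :=
  {e | ∃ a b, G.Adj v a ∧ G.Adj a b ∧ G.Adj b w ∧
      (e = s(v, a) ∨ e = s(a, b) ∨ e = s(b, w))}

lemma covSet_subset (G : SimpleGraph (Fin n)) (v w : Fin n) :
    covSet G v w ⊆ G.edgeSet := by
  rintro e ⟨a, b, h1, h2, h3, (rfl | rfl | rfl)⟩ <;>
    simp [SimpleGraph.mem_edgeSet, h1, h2, h3]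

lemma covSet_diam (G : SimpleGraph (Fin n)) (v w : Fin n) :
    EdgeSetDiamLE (covSet G v w) 3 := by
  intro x y hx hy
  set H := SimpleGraph.fromEdgeSet (covSet G v w) with hH
  -- every vertex of the support lies at position `k ≤ 3` of a walk from `v` to `w`,
  -- all of whose edges belong to `H`.
  have key : ∀ u ∈ H.support, ∃ k : ℕ, k ≤ 3 ∧ H.edist u v ≤ (k : ℕ∞) ∧
      H.edist u w ≤ ((3 - k : ℕ) : ℕ∞) := by
    intro u hu
    obtain ⟨u', hadj⟩ := (SimpleGraph.mem_support H).mp hu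
    rw [SimpleGraph.fromEdgeSet_adj] at hadj
    obtain ⟨⟨a, b, h1, h2, h3, hcase⟩, hne⟩ := hadj
    have Hva : H.Adj v a := by
      rw [hH, SimpleGraph.fromEdgeSet_adj]
      exact ⟨⟨a, b, h1, h2, h3, Or.inl rfl⟩, h1.ne⟩
    have Hab : H.Adj a b := by
      rw [hH, SimpleGraph.fromEdgeSet_adj]
      exact ⟨⟨a, b, h1, h2, h3, Or.inr (Or.inl rfl)⟩, h2.ne⟩
    have Hbw : H.Adj b w := by
      rw [hH, SimpleGraph.fromEdgeSet_adj]
      exact ⟨⟨a, b, h1, h2, h3, Or.inr (Or.inr rfl)⟩, h3.ne⟩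
    have hposition : u = v ∨ u = a ∨ u = b ∨ u = w := by
      rcases hcase with h | h | h <;> rw [Sym2.eq_iff] at h <;>
        rcases h with ⟨h, -⟩ | ⟨h, -⟩ <;> tauto
    -- distances along the walk
    have dva : H.edist v a ≤ 1 := by
      simpa using SimpleGraph.edist_le (SimpleGraph.Walk.cons Hva SimpleGraph.Walk.nil)
    have dab : H.edist a b ≤ 1 := by
      simpa using SimpleGraph.edist_le (SimpleGraph.Walk.cons Hab SimpleGraph.Walk.nil)
    have dbw : H.edist b w ≤ 1 := by
      simpa using SimpleGraph.edist_le (SimpleGraph.Walk.cons Hbw SimpleGraph.Walk.nil)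
    have dvw : H.edist v w ≤ 3 := by
      calc H.edist v w ≤ H.edist v a + H.edist a w := SimpleGraph.edist_triangle
        _ ≤ H.edist v a + (H.edist a b + H.edist b w) :=
            add_le_add_right SimpleGraph.edist_triangle _
        _ ≤ 1 + (1 + 1) := by
            exact add_le_add dva (add_le_add dab dbw)
        _ = 3 := by norm_num
    have daw : H.edist a w ≤ 2 := by
      calc H.edist a w ≤ H.edist a b + H.edist b w := SimpleGraph.edist_triangle
        _ ≤ 1 + 1 := add_le_add dab dbw
        _ = 2 := by norm_num
    have dvb : H.edist v b ≤ 2 := by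
      calc H.edist v b ≤ H.edist v a + H.edist a b := SimpleGraph.edist_triangle
        _ ≤ 1 + 1 := add_le_add dva dab
        _ = 2 := by norm_num
    rcases hposition with rfl | rfl | rfl | rfl
    · exact ⟨0, by norm_num, by simp [SimpleGraph.edist_self], by simpa using dvw⟩
    · refine ⟨1, by norm_num, ?_, ?_⟩
      · rw [SimpleGraph.edist_comm]; simpa using dva
      · simpa using daw
    · refine ⟨2, by norm_num, ?_, ?_⟩
      · rw [SimpleGraph.edist_comm]; simpa using dvb
      · simpa using dbw
    · refine ⟨3, by norm_num, ?_, ?_⟩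
      · rw [SimpleGraph.edist_comm]; simpa using dvw
      · simp [SimpleGraph.edist_self]
  obtain ⟨k, hk3, hkv, hkw⟩ := key x hx
  obtain ⟨m, hm3, hmv, hmw⟩ := key y hy
  by_cases h : k + m ≤ 3
  · calc H.edist x y ≤ H.edist x v + H.edist v y := SimpleGraph.edist_triangle
      _ ≤ (k : ℕ∞) + (m : ℕ∞) := by
          refine add_le_add hkv ?_
          rw [SimpleGraph.edist_comm]; exact hmv
      _ ≤ 3 := by exact_mod_cast h
  · have h' : (3 - k) + (3 - m) ≤ 3 := by omega
    calc H.edist x y ≤ H.edist x w + H.edist w y := SimpleGraph.edist_triangle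
      _ ≤ ((3 - k : ℕ) : ℕ∞) + ((3 - m : ℕ) : ℕ∞) := by
          refine add_le_add hkw ?_
          rw [SimpleGraph.edist_comm]; exact hmw
      _ ≤ 3 := by exact_mod_cast h'

/-- The covering edge set, as a finset. -/
noncomputable def covF (G : SimpleGraph (Fin n)) (p : Fin n × Fin n) :
    Finset (Sym2 (Fin n)) :=
  (Set.toFinite (covSet G p.1 p.2)).toFinset

lemma mem_covF {G : SimpleGraph (Fin n)} {p : Fin n × Fin n} {e : Sym2 (Fin n)} :
    e ∈ covF G p ↔ e ∈ covSet G p.1 p.2 := Set.Finite.mem_toFinset _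

/-- The edge set of `G`, as a finset. -/
noncomputable def edgeF (G : SimpleGraph (Fin n)) : Finset (Sym2 (Fin n)) :=
  (Set.toFinite G.edgeSet).toFinset

lemma mem_edgeF {G : SimpleGraph (Fin n)} {e : Sym2 (Fin n)} :
    e ∈ edgeF G ↔ e ∈ G.edgeSet := Set.Finite.mem_toFinset _

lemma greedy (G : SimpleGraph (Fin n)) (ε : ℝ) (hε : 0 < ε) (hε1 : ε ≤ 1) (hn : 1 ≤ n)
    (hdeg : ∀ v, ε * n ≤ ((G.neighborSet v).ncard : ℝ)) (k : ℕ) :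
    ∃ L : List (Fin n × Fin n), L.length = k ∧
      ((((edgeF G).filter (fun e => ∀ p ∈ L, e ∉ covF G p)).card : ℝ)
        ≤ (1 - ε ^ 2) ^ k * (n : ℝ) ^ 2) := by
  classical
  haveI : NeZero n := ⟨by omega⟩
  induction k with
  | zero =>
    refine ⟨[], rfl, ?_⟩
    have h1 : (edgeF G).filter (fun e => ∀ p ∈ ([] : List (Fin n × Fin n)), e ∉ covF G p)
        = edgeF G := by
      apply Finset.filter_true_of_mem; intro e _; simp
    rw [h1, pow_zero, one_mul]
    have h2 : (edgeF G).card ≤ n ^ 2 := by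
      have h3 : (edgeF G).card ≤ Fintype.card (Sym2 (Fin n)) := Finset.card_le_univ _
      have h4 : Fintype.card (Sym2 (Fin n)) = Nat.choose (n + 1) 2 := by
        rw [Sym2.card, Fintype.card_fin]
      have h5 : Nat.choose (n + 1) 2 ≤ n ^ 2 := by
        rw [Nat.choose_two_right]
        have : (n + 1) * (n + 1 - 1) ≤ 2 * n ^ 2 := by
          simp only [Nat.add_sub_cancel]; nlinarith
        exact Nat.div_le_of_le_mul this
      omega
    exact_mod_cast h2
  | succ k ih =>
    obtain ⟨L, hlen, hcard⟩ := ih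
    set U := (edgeF G).filter (fun e => ∀ p ∈ L, e ∉ covF G p) with hU
    -- averaging: some pair covers at least an ε² fraction of `U`.
    have hdouble : ∑ e ∈ U, (((Finset.univ.filter
          (fun p : Fin n × Fin n => e ∈ covF G p)).card : ℝ))
        = ∑ p : Fin n × Fin n, (((U.filter (fun e => e ∈ covF G p)).card : ℝ)) := by
      push_cast [Finset.card_filter]
      exact Finset.sum_comm
    have hedgebound : ∀ e ∈ U, ε ^ 2 * (n : ℝ) ^ 2 ≤
        ((Finset.univ.filter (fun p : Fin n × Fin n => e ∈ covF G p)).card : ℝ) := by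
      intro e he
      have heE : e ∈ G.edgeSet := mem_edgeF.mp (Finset.mem_filter.mp he).1
      obtain ⟨a, b, rfl, hab⟩ : ∃ a b, e = s(a, b) ∧ G.Adj a b := by
        induction e using Sym2.ind with
        | _ a b => exact ⟨a, b, rfl, G.mem_edgeSet.mp heE⟩
      set NA := (Set.toFinite (G.neighborSet a)).toFinset with hNA
      set NB := (Set.toFinite (G.neighborSet b)).toFinset with hNB
      have hsub : NA ×ˢ NB ⊆
          Finset.univ.filter (fun p : Fin n × Fin n => s(a, b) ∈ covF G p) := by
        rintro ⟨v, w⟩ hvw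
        rw [Finset.mem_product] at hvw
        obtain ⟨hv, hw⟩ := hvw
        rw [hNA, Set.Finite.mem_toFinset, SimpleGraph.mem_neighborSet] at hv
        rw [hNB, Set.Finite.mem_toFinset, SimpleGraph.mem_neighborSet] at hw
        refine Finset.mem_filter.mpr ⟨Finset.mem_univ _, ?_⟩
        rw [mem_covF]
        exact ⟨a, b, hv.symm, hab, hw, Or.inr (Or.inl rfl)⟩
      have hcardsub : NA.card * NB.card ≤
          (Finset.univ.filter (fun p : Fin n × Fin n => s(a, b) ∈ covF G p)).card := by
        rw [← Finset.card_product]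
        exact Finset.card_le_card hsub
      have hNAcard : ε * n ≤ (NA.card : ℝ) := by
        rw [hNA, ← Set.ncard_eq_toFinset_card _ (Set.toFinite _)]
        exact hdeg a
      have hNBcard : ε * n ≤ (NB.card : ℝ) := by
        rw [hNB, ← Set.ncard_eq_toFinset_card _ (Set.toFinite _)]
        exact hdeg b
      have h0 : (0 : ℝ) ≤ ε * n := by positivity
      calc ε ^ 2 * (n : ℝ) ^ 2 = (ε * n) * (ε * n) := by ring
        _ ≤ (NA.card : ℝ) * (NB.card : ℝ) := mul_le_mul hNAcard hNBcard h0 (by positivity)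
        _ ≤ _ := by exact_mod_cast hcardsub
    have hsum : (U.card : ℝ) * (ε ^ 2 * (n : ℝ) ^ 2) ≤
        ∑ p : Fin n × Fin n, (((U.filter (fun e => e ∈ covF G p)).card : ℝ)) := by
      rw [← hdouble]
      calc (U.card : ℝ) * (ε ^ 2 * (n : ℝ) ^ 2) = ∑ _e ∈ U, ε ^ 2 * (n : ℝ) ^ 2 := by
            rw [Finset.sum_const, nsmul_eq_mul]
        _ ≤ _ := Finset.sum_le_sum hedgebound
    have hexists : ∃ p : Fin n × Fin n,
        ε ^ 2 * (U.card : ℝ) ≤ ((U.filter (fun e => e ∈ covF G p)).card : ℝ) := by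
      by_contra hcon
      push_neg at hcon
      have hlt : ∑ p : Fin n × Fin n, (((U.filter (fun e => e ∈ covF G p)).card : ℝ))
          < ∑ _p : Fin n × Fin n, ε ^ 2 * (U.card : ℝ) :=
        Finset.sum_lt_sum_of_nonempty Finset.univ_nonempty (fun p _ => hcon p)
      rw [Finset.sum_const, nsmul_eq_mul] at hlt
      have hcardu : ((Finset.univ : Finset (Fin n × Fin n)).card : ℝ) = (n : ℝ) ^ 2 := by
        simp [Finset.card_univ, sq]
      rw [hcardu] at hlt
      nlinarith
    obtain ⟨p, hp⟩ := hexists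
    refine ⟨p :: L, by simp [hlen], ?_⟩
    have hsplit : ((U.filter (fun e => e ∈ covF G p)).card : ℝ)
        + ((U.filter (fun e => e ∉ covF G p)).card : ℝ) = (U.card : ℝ) := by
      exact_mod_cast Finset.card_filter_add_card_filter_not
        (s := U) (p := fun e => e ∈ covF G p)
    have hU' : (edgeF G).filter (fun e => ∀ q ∈ p :: L, e ∉ covF G q)
        = U.filter (fun e => e ∉ covF G p) := by
      rw [hU, Finset.filter_filter]
      apply Finset.filter_congr
      intro e _
      simp only [List.mem_cons, forall_eq_or_imp]
      tauto
    rw [hU']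
    have h1ε : (0 : ℝ) ≤ 1 - ε ^ 2 := by nlinarith
    have hUnonneg : (0 : ℝ) ≤ (U.card : ℝ) := Nat.cast_nonneg _
    calc ((U.filter (fun e => e ∉ covF G p)).card : ℝ)
        = (U.card : ℝ) - ((U.filter (fun e => e ∈ covF G p)).card : ℝ) := by linarith
      _ ≤ (U.card : ℝ) - ε ^ 2 * (U.card : ℝ) := by linarith
      _ = (1 - ε ^ 2) * (U.card : ℝ) := by ring
      _ ≤ (1 - ε ^ 2) * ((1 - ε ^ 2) ^ k * (n : ℝ) ^ 2) :=
          mul_le_mul_of_nonneg_left hcard h1ε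
      _ = (1 - ε ^ 2) ^ (k + 1) * (n : ℝ) ^ 2 := by ring

lemma analytic (ε : ℝ) (h0 : 0 < ε) (h1 : ε < 1) (hn : 2 ≤ n) :
    (1 - ε ^ 2) ^ (⌈2 * ε⁻¹ ^ 2 * Real.logb 2 n⌉₊) * (n : ℝ) ^ 2 < 1 := by
  set ℓ := ⌈2 * ε⁻¹ ^ 2 * Real.logb 2 n⌉₊ with hℓ
  have hn1 : (1 : ℝ) < (n : ℝ) := by exact_mod_cast hn.trans_lt' one_lt_two
  have hlogn : 0 < Real.log n := Real.log_pos hn1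
  have hεsq : 0 < ε ^ 2 := by positivity
  have hle : 2 * ε⁻¹ ^ 2 * Real.logb 2 n ≤ (ℓ : ℝ) := Nat.le_ceil _
  have hA : (1 - ε ^ 2) ^ ℓ ≤ Real.exp (-(ε ^ 2) * ℓ) := by
    calc (1 - ε ^ 2) ^ ℓ ≤ (Real.exp (-(ε ^ 2))) ^ ℓ := by
          apply pow_le_pow_left₀ (by nlinarith)
          have := Real.add_one_le_exp (-(ε ^ 2))
          linarith
      _ = Real.exp (-(ε ^ 2) * ℓ) := by
          rw [← Real.exp_nat_mul]; ring_nf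
  have hB : -(ε ^ 2) * ℓ ≤ -(2 * Real.logb 2 n) := by
    have h2 : ε ^ 2 * (2 * ε⁻¹ ^ 2 * Real.logb 2 n) = 2 * Real.logb 2 n := by
      field_simp
    nlinarith [mul_le_mul_of_nonneg_left hle hεsq.le]
  have hC : -(2 * Real.logb 2 n) < -(2 * Real.log n) := by
    have hlog2pos : 0 < Real.log 2 := Real.log_pos one_lt_two
    have hlog2lt : Real.log 2 < 1 := by
      have := Real.log_two_lt_d9
      linarith
    have : Real.log n < Real.logb 2 n := by
      rw [Real.logb, lt_div_iff₀ hlog2pos]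
      nlinarith
    linarith
  have hD : Real.exp (-(2 * Real.log n)) = ((n : ℝ) ^ 2)⁻¹ := by
    rw [Real.exp_neg]
    congr 1
    rw [two_mul, Real.exp_add, Real.exp_log (by linarith), sq]
  have hnsq : (0 : ℝ) < (n : ℝ) ^ 2 := by positivity
  have hfinal : (1 - ε ^ 2) ^ ℓ < ((n : ℝ) ^ 2)⁻¹ := by
    calc (1 - ε ^ 2) ^ ℓ ≤ Real.exp (-(ε ^ 2) * ℓ) := hA
      _ ≤ Real.exp (-(2 * Real.logb 2 n)) := Real.exp_le_exp.mpr hB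
      _ < Real.exp (-(2 * Real.log n)) := Real.exp_lt_exp.mpr hC
      _ = ((n : ℝ) ^ 2)⁻¹ := hD
  calc (1 - ε ^ 2) ^ ℓ * (n : ℝ) ^ 2 < ((n : ℝ) ^ 2)⁻¹ * (n : ℝ) ^ 2 :=
        mul_lt_mul_of_pos_right hfinal hnsq
    _ = 1 := inv_mul_cancel₀ hnsq.ne'

end Stmt13

/-- For every ε > 0 and sufficiently large n, every graph on n
vertices with minimum degree at least εn admits a covering of its edge set by
ℓ = ⌈2ε⁻² log₂ n⌉ sets, each of diameter at most 3. -/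
theorem stmt_13 (ε : ℝ) (hε : 0 < ε) :
    ∃ N : ℕ, ∀ n : ℕ, N ≤ n → ∀ G : SimpleGraph (Fin n),
      (∀ v : Fin n, ε * n ≤ ((G.neighborSet v).ncard : ℝ)) →
      ∃ E : Fin ⌈2 * ε⁻¹ ^ 2 * Real.logb 2 n⌉₊ → Set (Sym2 (Fin n)),
        (⋃ i, E i) = G.edgeSet ∧ ∀ i, EdgeSetDiamLE (E i) 3 := by
  classical
  refine ⟨2, fun n hn G hG => ?_⟩
  have hn0 : 0 < n := by omega
  have hn0' : (0 : ℝ) < (n : ℝ) := by exact_mod_cast hn0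
  haveI : NeZero n := ⟨by omega⟩
  -- ε < 1
  have hε1 : ε < 1 := by
    have hv : (0 : Fin n) ∈ (Set.univ : Set (Fin n)) := Set.mem_univ _
    have hss : G.neighborSet 0 ⊂ Set.univ := by
      refine ⟨Set.subset_univ _, fun h => ?_⟩
      have : (0 : Fin n) ∈ G.neighborSet 0 := h (Set.mem_univ _)
      exact G.irrefl this
    have hlt : (G.neighborSet 0).ncard < (Set.univ : Set (Fin n)).ncard :=
      Set.ncard_lt_ncard hss (Set.toFinite _)
    have huniv : (Set.univ : Set (Fin n)).ncard = n := by
      rw [Set.ncard_univ]; simp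
    rw [huniv] at hlt
    have h2 : ((G.neighborSet 0).ncard : ℝ) < (n : ℝ) := by exact_mod_cast hlt
    have h3 := hG 0
    have : ε * n < 1 * n := by linarith [one_mul (n : ℝ)]
    exact lt_of_mul_lt_mul_right this hn0'.le
  obtain ⟨L, hlen, hcard⟩ := Stmt13.greedy G ε hε hε1.le (by omega) hG
    ⌈2 * ε⁻¹ ^ 2 * Real.logb 2 (n : ℝ)⌉₊
  have hanal := Stmt13.analytic (n := n) ε hε hε1 hn
  have hzero : ((Stmt13.edgeF G).filter
      (fun e => ∀ p ∈ L, e ∉ Stmt13.covF G p)).card = 0 := by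
    have : (((Stmt13.edgeF G).filter
        (fun e => ∀ p ∈ L, e ∉ Stmt13.covF G p)).card : ℝ) < 1 := lt_of_le_of_lt hcard hanal
    exact_mod_cast Nat.lt_one_iff.mp (by exact_mod_cast this)
  have hcov : ∀ e ∈ G.edgeSet, ∃ p ∈ L, e ∈ Stmt13.covF G p := by
    intro e he
    by_contra hne
    push_neg at hne
    have : e ∈ (Stmt13.edgeF G).filter (fun e => ∀ p ∈ L, e ∉ Stmt13.covF G p) :=
      Finset.mem_filter.mpr ⟨Stmt13.mem_edgeF.mpr he, hne⟩
    have := Finset.card_pos.mpr ⟨e, this⟩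
    omega
  refine ⟨fun i => Stmt13.covSet G (L.get (Fin.cast hlen.symm i)).1
      (L.get (Fin.cast hlen.symm i)).2, ?_, ?_⟩
  · apply subset_antisymm
    · exact Set.iUnion_subset fun i => Stmt13.covSet_subset G _ _
    · intro e he
      obtain ⟨p, hpL, hpe⟩ := hcov e he
      obtain ⟨i, hi⟩ := List.mem_iff_get.mp hpL
      refine Set.mem_iUnion.mpr ⟨Fin.cast hlen i, ?_⟩
      have hcast : Fin.cast hlen.symm (Fin.cast hlen i) = i := by
        ext; simp
      rw [hcast, hi]
      exact Stmt13.mem_covF.mp hpe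
  · exact fun i => Stmt13.covSet_diam G _ _
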